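/- Let M be a matroid on {1, …, n} with base family 𝓑 and let k ≥ 1. Then S_{k+1}(𝓑) = A(S_k(𝓑)); that is, the family of (k+1)-st multigraded shift supports equals the adjacency family of the family of k-th multigraded shift supports. -/

import Mathlib

/-- Two sets are *adjacent* if each has exactly one element outside the other. -/
def AdjacentSets {α : Type*} (B C : Set α) : Prop :=
  (B \ C).ncard = 1 ∧ (C \ B).ncard = 1

/-- The *adjacency family* of a family of sets: all unions of adjacent pairs of members. -/
def adjFam {α : Type*} (𝓕 : Set (Set α)) : Set (Set α) :=
  {U | ∃ B ∈ 𝓕, ∃ C ∈ 𝓕, AdjacentSets B C ∧ U = B ∪ C}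

/-- For a family `𝓑` of subsets of `{1, …, n}` (ordered so that `i >_lex j ↔ i < j` as
integers) and `B ∈ 𝓑`, the set `set(B)` consists of all `e ∉ B` for which there exists
`t ∈ B` with `e >_lex t` (that is, `e < t`) and `(B \ {t}) ∪ {e} ∈ 𝓑`. -/
def lexSet {n : ℕ} (𝓑 : Set (Set (Fin n))) (B : Set (Fin n)) : Set (Fin n) :=
  {e | e ∉ B ∧ ∃ t ∈ B, e < t ∧ insert e (B \ {t}) ∈ 𝓑}

/-- `S_ℓ(𝓑) = { B ∪ E : B ∈ 𝓑, E ⊆ set(B), |E| = ℓ }`, the family of supports of the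
`ℓ`-th multigraded shifts of the matroidal ideal of `𝓑`. -/
def shiftFam {n : ℕ} (𝓑 : Set (Set (Fin n))) (ℓ : ℕ) : Set (Set (Fin n)) :=
  {U | ∃ B ∈ 𝓑, ∃ E, E ⊆ lexSet 𝓑 B ∧ E.ncard = ℓ ∧ U = B ∪ E}

open Set

/-- Exchange: a base `B`, a non-loop `e ∉ B`; then some `t ∈ B` can be swapped for `e`. -/
lemma exists_exchange_aux {n : ℕ} (M : Matroid (Fin n)) (hE : M.E = Set.univ)
    {B : Set (Fin n)} (hB : M.IsBase B) {e : Fin n} (he : M.Indep {e}) (heB : e ∉ B) :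
    ∃ t ∈ B, M.IsBase (insert e (B \ {t})) := by
  have hXE : insert e B ⊆ M.E := by rw [hE]; exact subset_univ _
  obtain ⟨J, hJ, heJ⟩ := he.subset_isBasis_of_subset
    (singleton_subset_iff.2 (mem_insert e B)) hXE
  have hBX : M.IsBasis B (insert e B) := hB.isBasis_of_subset hXE (subset_insert e B)
  have hcard : J.encard = B.encard := hJ.encard_eq_encard hBX
  obtain ⟨B'', hB'', hJB''⟩ := hJ.indep.exists_isBase_superset
  have hJB : J = B'' := by
    refine J.toFinite.eq_of_subset_of_encard_le hJB'' ?_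
    rw [hcard, hB.encard_eq_encard_of_isBase hB'']
  have hJbase : M.IsBase J := hJB ▸ hB''
  have heJ' : e ∈ J := heJ rfl
  have hJdiff : J \ B = {e} := by
    apply Subset.antisymm
    · intro x hx
      rcases hJ.subset hx.1 with h | h
      · exact h
      · exact absurd h hx.2
    · exact singleton_subset_iff.2 ⟨heJ', heB⟩
  have hBdiff : (B \ J).encard = 1 := by
    rw [hB.encard_diff_comm hJbase, hJdiff, encard_singleton]
  obtain ⟨t, ht⟩ := encard_eq_one.1 hBdiff
  have htB : t ∈ B := (ht ▸ (mem_singleton t) : t ∈ B \ J).1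
  refine ⟨t, htB, ?_⟩
  have : J = insert e (B \ {t}) := by
    ext x
    constructor
    · intro hx
      rcases hJ.subset hx with h | h
      · exact Or.inl h
      · refine Or.inr ⟨h, ?_⟩
        intro hxt
        have : x ∈ B \ J := ht ▸ (hxt ▸ rfl : x ∈ ({t} : Set (Fin n)))
        exact this.2 hx
    · rintro (rfl | ⟨hxB, hxt⟩)
      · exact heJ'
      · by_contra hxJ
        have : x ∈ ({t} : Set (Fin n)) := ht ▸ ⟨hxB, hxJ⟩
        exact hxt this
  exact this ▸ hJbase

/-- Weight of a finite set: sum of the values of its elements. -/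
noncomputable def setWeight {n : ℕ} (B : Set (Fin n)) : ℕ :=
  ∑ x ∈ B.toFinite.toFinset, (x : ℕ)

lemma setWeight_exchange {n : ℕ} {B : Set (Fin n)} {e t : Fin n}
    (htB : t ∈ B) (heB : e ∉ B) :
    setWeight (insert e (B \ {t})) + (t : ℕ) = setWeight B + (e : ℕ) := by
  classical
  unfold setWeight
  have h1 : (insert e (B \ {t})).toFinite.toFinset
      = insert e ((B.toFinite.toFinset).erase t) := by
    ext x
    rw [Set.Finite.mem_toFinset, Set.mem_insert_iff, Set.mem_diff, Set.mem_singleton_iff,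
      Finset.mem_insert, Finset.mem_erase, Set.Finite.mem_toFinset]
    tauto
  rw [h1, Finset.sum_insert (by simp only [Finset.mem_erase, Set.Finite.mem_toFinset]; exact fun h => heB h.2)]
  have h2 : ∑ x ∈ (B.toFinite.toFinset).erase t, (x : ℕ) + (t : ℕ)
      = ∑ x ∈ B.toFinite.toFinset, (x : ℕ) :=
    Finset.sum_erase_add _ _ (by simpa using htB)
  omega

/-- Characterization of the shift families for a matroid: `U ∈ S_ℓ(𝓑)` iff all elements of
`U` are non-loops and `U` contains a base `B` with `|U \ B| = ℓ`. -/
lemma mem_shiftFam_iff {n : ℕ} (M : Matroid (Fin n)) (hE : M.E = Set.univ)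
    (𝓑 : Set (Set (Fin n))) (h𝓑 : 𝓑 = {B | M.IsBase B}) (ℓ : ℕ) (U : Set (Fin n)) :
    U ∈ shiftFam 𝓑 ℓ ↔
      (∀ e ∈ U, M.Indep {e}) ∧ ∃ B, M.IsBase B ∧ B ⊆ U ∧ (U \ B).ncard = ℓ := by
  subst h𝓑
  constructor
  · rintro ⟨B, hB, E, hE', hEcard, rfl⟩
    have hEB : ∀ e ∈ E, e ∉ B := fun e heE => (hE' heE).1
    constructor
    · rintro e (heB | heE)
      · exact (hB.indep).subset (singleton_subset_iff.2 heB)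
      · obtain ⟨_, t, htB, _, hbase⟩ := hE' heE
        exact (hbase : M.IsBase _).indep.subset (singleton_subset_iff.2 (mem_insert e _))
    · refine ⟨B, hB, subset_union_left, ?_⟩
      have : (B ∪ E) \ B = E := by
        rw [union_diff_left]
        ext x; exact ⟨fun h => h.1, fun h => ⟨h, hEB x h⟩⟩
      rw [this, hEcard]
  · rintro ⟨hnl, B₀, hB₀, hB₀U, hcard⟩
    -- pick a base `B ⊆ U` of maximum weight
    have hSfin : {B | M.IsBase B ∧ B ⊆ U}.Finite := Set.toFinite _
    obtain ⟨B, ⟨hB, hBU⟩, hmax⟩ :=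
      Set.exists_max_image {B | M.IsBase B ∧ B ⊆ U} setWeight hSfin ⟨B₀, hB₀, hB₀U⟩
    have hsub : U \ B ⊆ lexSet {B | M.IsBase B} B := by
      rintro e ⟨heU, heB⟩
      obtain ⟨t, htB, hbase⟩ := exists_exchange_aux M hE hB (hnl e heU) heB
      have hB'U : insert e (B \ {t}) ⊆ U :=
        insert_subset heU ((diff_subset).trans hBU)
      have hle : setWeight (insert e (B \ {t})) ≤ setWeight B :=
        hmax _ ⟨hbase, hB'U⟩
      have hw := setWeight_exchange htB heB
      have het : (e : ℕ) ≤ (t : ℕ) := by omega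
      have hne : e ≠ t := fun h => heB (h ▸ htB)
      have helt : e < t := lt_of_le_of_ne (Fin.le_def.2 het) hne
      exact ⟨heB, t, htB, helt, hbase⟩
    refine ⟨B, hB, U \ B, hsub, ?_, (union_diff_cancel hBU).symm⟩
    rw [ncard_diff hBU, hB.ncard_eq_ncard_of_isBase hB₀, ← ncard_diff hB₀U, hcard]

theorem shiftFam_succ_eq_adjFam_shiftFam {n : ℕ} (M : Matroid (Fin n))
    (hE : M.E = Set.univ) (𝓑 : Set (Set (Fin n))) (h𝓑 : 𝓑 = {B | M.IsBase B})
    (k : ℕ) (hk : 1 ≤ k) :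
    shiftFam 𝓑 (k + 1) = adjFam (shiftFam 𝓑 k) := by
  have char := mem_shiftFam_iff M hE 𝓑 h𝓑
  ext U
  constructor
  · intro hU
    obtain ⟨hnl, B, hB, hBU, hcard⟩ := (char (k + 1) U).1 hU
    have hfin : (U \ B).Finite := Set.toFinite _
    have h2 : 1 < (U \ B).ncard := by omega
    obtain ⟨e₁, e₂, he₁, he₂, hne⟩ := (Set.one_lt_ncard_iff hfin).1 h2
    have key : ∀ e ∈ U \ B, U \ {e} ∈ shiftFam 𝓑 k := by
      intro e he
      refine (char k _).2 ⟨fun x hx => hnl x hx.1, B, hB, ?_, ?_⟩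
      · exact subset_diff_singleton hBU (fun h => he.2 h)
      · have : (U \ {e}) \ B = ((U \ B) \ {e}) := by
          ext x; constructor
          · rintro ⟨⟨h1, h2⟩, h3⟩; exact ⟨⟨h1, h3⟩, h2⟩
          · rintro ⟨⟨h1, h2⟩, h3⟩; exact ⟨⟨h1, h3⟩, h2⟩
        rw [this, ncard_diff_singleton_of_mem he, hcard]
        omega
    refine ⟨U \ {e₁}, key e₁ he₁, U \ {e₂}, key e₂ he₂, ⟨?_, ?_⟩, ?_⟩
    · have : (U \ {e₁}) \ (U \ {e₂}) = ({e₂} : Set (Fin n)) := by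
        ext x
        simp only [mem_diff, mem_singleton_iff]
        constructor
        · rintro ⟨⟨hxU, hx1⟩, h⟩
          by_contra hx2
          exact h ⟨hxU, hx2⟩
        · rintro rfl
          exact ⟨⟨he₂.1, fun h => hne h.symm⟩, fun h => h.2 rfl⟩
      rw [this, ncard_singleton]
    · have : (U \ {e₂}) \ (U \ {e₁}) = ({e₁} : Set (Fin n)) := by
        ext x
        simp only [mem_diff, mem_singleton_iff]
        constructor
        · rintro ⟨⟨hxU, hx2⟩, h⟩
          by_contra hx1
          exact h ⟨hxU, hx1⟩
        · rintro rfl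
          exact ⟨⟨he₁.1, fun h => hne h⟩, fun h => h.2 rfl⟩
      rw [this, ncard_singleton]
    · ext x
      simp only [mem_union, mem_diff, mem_singleton_iff]
      constructor
      · intro hx
        rcases eq_or_ne x e₁ with rfl | h
        · exact Or.inr ⟨hx, fun h => hne h⟩
        · exact Or.inl ⟨hx, h⟩
      · rintro (⟨h, _⟩ | ⟨h, _⟩) <;> exact h
  · rintro ⟨C, hC, D, hD, ⟨hCD, hDC⟩, rfl⟩
    obtain ⟨hnlC, B, hB, hBC, hcardC⟩ := (char k C).1 hC
    obtain ⟨hnlD, _, _, _, _⟩ := (char k D).1 hD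
    refine (char (k + 1) _).2 ⟨?_, B, hB, hBC.trans subset_union_left, ?_⟩
    · rintro e (he | he)
      · exact hnlC e he
      · exact hnlD e he
    · have hsplit : (C ∪ D) \ B = (C \ B) ∪ (D \ C) := by
        ext x
        constructor
        · rintro ⟨(h | h), hxB⟩
          · exact Or.inl ⟨h, hxB⟩
          · rcases Classical.em (x ∈ C) with hxC | hxC
            · exact Or.inl ⟨hxC, hxB⟩
            · exact Or.inr ⟨h, hxC⟩
        · rintro (⟨h1, h2⟩ | ⟨h1, h2⟩)
          · exact ⟨Or.inl h1, h2⟩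
          · exact ⟨Or.inr h1, fun hxB => h2 (hBC hxB)⟩
      have hdisj : Disjoint (C \ B) (D \ C) :=
        disjoint_left.2 (fun x hx hx' => hx'.2 hx.1)
      rw [hsplit, ncard_union_eq hdisj (Set.toFinite _) (Set.toFinite _), hcardC, hDC]
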